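/- Under the assumptions of the finite-alphabet impossibility construction, any α-error Type-2 detector satisfies α ≥ ½ exp(-N²/(M-N)), where M = ⌊β|X|⌋ and N < M is the training set size. -/

import Mathlib

open MeasureTheory
open scoped ENNReal

/-- Total variation distance between two PMFs on a finite alphabet. -/
noncomputable def tvPMF {X : Type*} [Fintype X] (P Q : PMF X) : ℝ :=
  (∑ x, |(P x).toReal - (Q x).toReal|) / 2

section AuxCombinatorics
open Finset

lemma aux_choose_prod (n M : ℕ) (hMn : M ≤ n) :
    ∀ d, d ≤ M → (Nat.choose (n - d) (M - d) : ℝ) * ∏ j ∈ range d, ((n : ℝ) - j)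
      = (Nat.choose n M : ℝ) * ∏ j ∈ range d, ((M : ℝ) - j) := by
  intro d
  induction d with
  | zero => simp
  | succ d ih =>
    intro hd
    have hd' : d ≤ M := Nat.le_of_succ_le hd
    have hnat : (n - d) * Nat.choose (n - d - 1) (M - d - 1) = Nat.choose (n - d) (M - d) * (M - d) := by
      have h1 : n - d = Nat.succ (n - d - 1) := by omega
      have h2 : M - d = Nat.succ (M - d - 1) := by omega
      calc (n - d) * Nat.choose (n - d - 1) (M - d - 1)
          = Nat.succ (n - d - 1) * Nat.choose (n - d - 1) (M - d - 1) := by rw [← h1]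
        _ = Nat.choose (Nat.succ (n - d - 1)) (Nat.succ (M - d - 1)) * Nat.succ (M - d - 1) :=
            Nat.add_one_mul_choose_eq _ _
        _ = Nat.choose (n - d) (M - d) * (M - d) := by rw [← h1, ← h2]
    have hcast : ((n - d : ℕ) : ℝ) = (n : ℝ) - d := by
      have : d ≤ n := le_trans hd' hMn; push_cast [this]; ring
    have hcast2 : ((M - d : ℕ) : ℝ) = (M : ℝ) - d := by push_cast [hd']; ring
    have hreal : ((n : ℝ) - d) * (Nat.choose (n - (d+1)) (M - (d+1)) : ℝ)
        = (Nat.choose (n - d) (M - d) : ℝ) * ((M : ℝ) - d) := by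
      have h3 : n - (d+1) = n - d - 1 := by omega
      have h4 : M - (d+1) = M - d - 1 := by omega
      rw [h3, h4, ← hcast, ← hcast2]
      exact_mod_cast congrArg (Nat.cast : ℕ → ℝ) hnat
    rw [prod_range_succ, prod_range_succ]
    linear_combination (∏ x ∈ range d, ((n:ℝ) - x)) * hreal + ((M:ℝ) - d) * ih hd'

lemma aux_factor_exp (M N j : ℕ) (hj : j < N) (hNM : N < M) :
    Real.exp (-(j : ℝ) / ((M : ℝ) - N)) ≤ ((M : ℝ) - j) / M := by
  have hjN : (j : ℝ) < N := by exact_mod_cast hj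
  have hNMr : (N : ℝ) < M := by exact_mod_cast hNM
  have hMN : (0:ℝ) < (M : ℝ) - N := sub_pos.2 hNMr
  have hM : (0:ℝ) < M := by
    have : 0 < M := by omega
    positivity
  have hj0 : (0:ℝ) ≤ j := Nat.cast_nonneg j
  have key := Real.add_one_le_exp ((j:ℝ)/((M:ℝ)-N))
  have hpos : (0:ℝ) < (j:ℝ)/((M:ℝ)-N) + 1 := by positivity
  have h2 : (Real.exp ((j:ℝ)/((M:ℝ)-N)))⁻¹ ≤ ((j:ℝ)/((M:ℝ)-N) + 1)⁻¹ :=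
    inv_anti₀ hpos key
  have hx : (j:ℝ)/((M:ℝ)-N)*((M:ℝ)-N) = j := div_mul_cancel₀ _ (ne_of_gt hMN)
  have h3 : ((j:ℝ)/((M:ℝ)-N) + 1)⁻¹ ≤ ((M:ℝ)-j)/M := by
    rw [inv_eq_one_div, div_le_div_iff₀ hpos hM]
    nlinarith [hx]
  calc Real.exp (-(j : ℝ) / ((M : ℝ) - N))
      = (Real.exp ((j:ℝ)/((M:ℝ)-N)))⁻¹ := by rw [← Real.exp_neg, neg_div]
    _ ≤ _ := le_trans h2 h3

lemma aux_prod_exp (M N : ℕ) (hNM : N < M) :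
    Real.exp (-(N : ℝ) ^ 2 / ((M : ℝ) - N)) ≤ ∏ j ∈ range N, (((M : ℝ) - j) / M) := by
  have hMN : (0:ℝ) < (M : ℝ) - N := sub_pos.2 (by exact_mod_cast hNM)
  calc Real.exp (-(N : ℝ) ^ 2 / ((M : ℝ) - N))
      ≤ Real.exp (∑ j ∈ range N, (-(j : ℝ) / ((M : ℝ) - N))) := by
        apply Real.exp_le_exp.2
        rw [← Finset.sum_div, div_le_div_iff_of_pos_right hMN]
        have hsum : ∑ j ∈ range N, (j:ℝ) ≤ (N:ℝ)*N := by
          calc ∑ j ∈ range N, (j:ℝ) ≤ ∑ _j ∈ range N, (N:ℝ) :=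
                Finset.sum_le_sum (fun i hi => by
                  exact_mod_cast le_of_lt (mem_range.1 hi))
            _ = (N:ℝ)*N := by simp [mul_comm]
        have : ∑ j ∈ range N, (-(j:ℝ)) = -∑ j ∈ range N, (j:ℝ) := by
          rw [Finset.sum_neg_distrib]
        rw [this]; nlinarith [hsum]
    _ = ∏ j ∈ range N, Real.exp (-(j : ℝ) / ((M : ℝ) - N)) := by rw [Real.exp_sum]
    _ ≤ ∏ j ∈ range N, (((M : ℝ) - j) / M) := by
        apply Finset.prod_le_prod
        · intro i _; positivity
        · intro i hi; exact aux_factor_exp M N i (mem_range.1 hi) hNM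

lemma aux_key (n M N t d : ℕ) (γ : ℝ) (hγ0 : 0 < γ) (hNM : N < M) (hMn : M ≤ n)
    (hdt : d ≤ t) (htN : t ≤ N) :
    (Nat.choose n M : ℝ) * Real.exp (-(N : ℝ) ^ 2 / ((M : ℝ) - N)) * (γ / n) ^ t
      ≤ (γ / M) ^ t * (Nat.choose (n - d) (M - d) : ℝ) := by
  have hM0 : 0 < M := by omega
  have hn0 : 0 < n := by omega
  have hMr : (0:ℝ) < M := by exact_mod_cast hM0
  have hnr : (0:ℝ) < n := by exact_mod_cast hn0
  have hMnr : (M:ℝ) ≤ n := by exact_mod_cast hMn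
  have hdM : d ≤ M := by omega
  have hnj : ∀ j ∈ range d, (0:ℝ) < (n:ℝ) - j := by
    intro j hj
    have : j < n := by have := mem_range.1 hj; omega
    have : (j:ℝ) < n := by exact_mod_cast this
    linarith
  have hMj : ∀ j ∈ range d, (0:ℝ) < (M:ℝ) - j := by
    intro j hj
    have : j < M := by have := mem_range.1 hj; omega
    have : (j:ℝ) < M := by exact_mod_cast this
    linarith
  have hQprod : (0:ℝ) < ∏ j ∈ range d, ((n:ℝ) - j) := Finset.prod_pos hnj
  set Q : ℝ := ∏ j ∈ range d, (((M:ℝ) - j) / ((n:ℝ) - j)) with hQdef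
  have hQ0 : 0 ≤ Q := Finset.prod_nonneg (fun j hj => by
    have := hnj j hj; have := hMj j hj; positivity)
  have hsplit : ∏ j ∈ range d, ((M:ℝ) - j) = Q * ∏ j ∈ range d, ((n:ℝ) - j) := by
    rw [hQdef, ← Finset.prod_mul_distrib]
    apply Finset.prod_congr rfl
    intro j hj
    rw [div_mul_cancel₀ _ (ne_of_gt (hnj j hj))]
  have hchoose : (Nat.choose (n - d) (M - d) : ℝ) = (Nat.choose n M : ℝ) * Q := by
    have h1 := aux_choose_prod n M hMn d hdM
    rw [hsplit] at h1
    apply mul_right_cancel₀ (ne_of_gt hQprod)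
    linear_combination h1
  have hc : Real.exp (-(N : ℝ) ^ 2 / ((M : ℝ) - N)) ≤ ((n:ℝ)/M) ^ t * Q := by
    have step1 : Real.exp (-(N : ℝ) ^ 2 / ((M : ℝ) - N))
        ≤ ∏ j ∈ range d, (((M:ℝ) - j) / M) := by
      refine le_trans (aux_prod_exp M N hNM) ?_
      rw [← Finset.prod_range_mul_prod_Ico (fun j => (((M:ℝ) - j) / M)) (le_trans hdt htN)]
      have h1 : ∏ j ∈ Finset.Ico d N, (((M:ℝ) - j) / M) ≤ 1 := by
        apply Finset.prod_le_one
        · intro j hj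
          have hjM : j < M := by have := (Finset.mem_Ico.1 hj).2; omega
          have : (j:ℝ) < M := by exact_mod_cast hjM
          have : (0:ℝ) ≤ (M:ℝ) - j := by linarith
          positivity
        · intro j hj
          have hj0 : (0:ℝ) ≤ j := Nat.cast_nonneg j
          rw [div_le_one hMr]; linarith
      have h2 : (0:ℝ) ≤ ∏ j ∈ range d, (((M:ℝ) - j) / M) := by
        apply Finset.prod_nonneg
        intro j hj
        have := hMj j hj; positivity
      exact mul_le_of_le_one_right h2 h1
    have step2 : ∏ j ∈ range d, (((M:ℝ) - j) / M)
        ≤ ∏ j ∈ range d, (((n:ℝ)/M) * (((M:ℝ) - j) / ((n:ℝ) - j))) := by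
      apply Finset.prod_le_prod
      · intro j hj; have := hMj j hj; positivity
      · intro j hj
        have h1 : ((n:ℝ)/M) * (((M:ℝ) - j) / ((n:ℝ) - j))
            = (((M:ℝ) - j) / M) * ((n:ℝ) / ((n:ℝ) - j)) := by ring
        rw [h1]
        apply le_mul_of_one_le_right
        · have := hMj j hj; positivity
        · rw [le_div_iff₀ (hnj j hj)]
          have hj0 : (0:ℝ) ≤ j := Nat.cast_nonneg j
          linarith
    have step3 : ∏ j ∈ range d, (((n:ℝ)/M) * (((M:ℝ) - j) / ((n:ℝ) - j)))
        = ((n:ℝ)/M) ^ d * Q := by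
      rw [Finset.prod_mul_distrib, Finset.prod_const, Finset.card_range]
    have step4 : ((n:ℝ)/M) ^ d * Q ≤ ((n:ℝ)/M) ^ t * Q := by
      apply mul_le_mul_of_nonneg_right _ hQ0
      apply pow_le_pow_right₀ _ hdt
      rw [le_div_iff₀ hMr]; linarith
    calc Real.exp (-(N : ℝ) ^ 2 / ((M : ℝ) - N)) ≤ _ := step1
      _ ≤ _ := step2
      _ = _ := step3
      _ ≤ _ := step4
  have hpow : ((γ:ℝ) / M) ^ t = (γ / n) ^ t * ((n:ℝ)/M) ^ t := by
    rw [← mul_pow]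
    congr 1
    field_simp
  rw [hchoose, hpow]
  have hcn : (0:ℝ) ≤ (Nat.choose n M : ℝ) * (γ / n) ^ t := by positivity
  calc (Nat.choose n M : ℝ) * Real.exp (-(N : ℝ) ^ 2 / ((M : ℝ) - N)) * (γ / n) ^ t
      = ((Nat.choose n M : ℝ) * (γ / n) ^ t) * Real.exp (-(N : ℝ) ^ 2 / ((M : ℝ) - N)) := by ring
    _ ≤ ((Nat.choose n M : ℝ) * (γ / n) ^ t) * (((n:ℝ)/M) ^ t * Q) :=
        mul_le_mul_of_nonneg_left hc hcn
    _ = (γ / n) ^ t * ((n:ℝ)/M) ^ t * ((Nat.choose n M : ℝ) * Q) := by ring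

lemma aux_count {X : Type*} [Fintype X] [DecidableEq X] (M : ℕ) (D : Finset X)
    (hD : D.card ≤ M) :
    (((univ : Finset X).powersetCard M).filter (fun S => D ⊆ S)).card
      = (Fintype.card X - D.card).choose (M - D.card) := by
  rw [← Finset.card_compl D, ← Finset.card_powersetCard]
  apply Finset.card_bij' (fun S _ => S \ D) (fun S' _ => S' ∪ D)
  · intro S hS
    rw [Finset.mem_filter, Finset.mem_powersetCard_univ] at hS
    rw [Finset.mem_powersetCard]
    constructor
    · intro x hx
      rw [Finset.mem_sdiff] at hx
      simpa using hx.2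
    · rw [Finset.card_sdiff_of_subset hS.2, hS.1]
  · intro S' hS'
    rw [Finset.mem_powersetCard] at hS'
    have hdisj : Disjoint S' D := by
      intro t ht ht'
      intro x hx
      have h1 := ht hx
      have h2 := ht' hx
      have := hS'.1 h1
      simp only [Finset.mem_compl] at this
      exact absurd h2 this
    rw [Finset.mem_filter, Finset.mem_powersetCard_univ]
    refine ⟨?_, Finset.subset_union_right⟩
    rw [Finset.card_union_of_disjoint hdisj, hS'.2]
    omega
  · intro S hS
    rw [Finset.mem_filter] at hS
    exact Finset.sdiff_union_of_subset hS.2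
  · intro S' hS'
    rw [Finset.mem_powersetCard] at hS'
    apply Finset.union_sdiff_cancel_right
    intro t ht ht'
    intro x hx
    have h1 := ht hx
    have h2 := ht' hx
    have := hS'.1 h1
    simp only [Finset.mem_compl] at this
    exact absurd h2 this

lemma aux_main {X : Type*} [Fintype X] [DecidableEq X] (M N : ℕ) (γ : ℝ)
    (hγ0 : 0 < γ) (hγ1 : γ ≤ 1) (hNM : N < M) (hMn : M ≤ Fintype.card X)
    (z : Fin N → X) :
    (Nat.choose (Fintype.card X) M : ℝ) * Real.exp (-(N : ℝ) ^ 2 / ((M : ℝ) - N))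
        * ((1:ℝ) / (Fintype.card X)) ^ N
      ≤ ∑ S ∈ (univ : Finset X).powersetCard M,
          ∏ i : Fin N, ((if z i ∈ S then γ / M else 0) + (1 - γ) / (Fintype.card X)) := by
  set n := Fintype.card X with hn
  have hn0 : 0 < n := by omega
  have hnr : (0:ℝ) < n := by exact_mod_cast hn0
  have hMr : (0:ℝ) < M := by
    have : 0 < M := by omega
    exact_mod_cast this
  have hexp : ∀ S : Finset X,
      ∏ i : Fin N, ((if z i ∈ S then γ / M else 0) + (1 - γ) / (n:ℝ))
        = ∑ T ∈ (univ : Finset (Fin N)).powerset,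
            (if T.image z ⊆ S then (γ/M)^T.card else 0) * ((1-γ)/(n:ℝ))^(N - T.card) := by
    intro S
    rw [Finset.prod_add]
    apply Finset.sum_congr rfl
    intro T hT
    have hcard : (univ \ T).card = N - T.card := by
      rw [Finset.card_sdiff_of_subset (Finset.subset_univ T)]
      simp
    rw [Finset.prod_const, hcard]
    congr 1
    by_cases h : T.image z ⊆ S
    · rw [if_pos h]
      rw [Finset.prod_congr rfl (fun i hi => if_pos (h (Finset.mem_image_of_mem z hi)))]
      rw [Finset.prod_const]
    · rw [if_neg h]
      obtain ⟨x, hx, hxS⟩ : ∃ x ∈ T.image z, x ∉ S := by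
        by_contra hc
        push_neg at hc
        exact h hc
      obtain ⟨i, hi, rfl⟩ := Finset.mem_image.1 hx
      exact Finset.prod_eq_zero hi (if_neg hxS)
  have hlhs : ((1:ℝ) / (n:ℝ)) ^ N
      = ∑ T ∈ (univ : Finset (Fin N)).powerset,
          (γ/(n:ℝ))^T.card * ((1-γ)/(n:ℝ))^(N - T.card) := by
    have h1 : ((1:ℝ) / (n:ℝ)) ^ N = ∏ _i : Fin N, (γ/(n:ℝ) + (1-γ)/(n:ℝ)) := by
      rw [Finset.prod_const]
      congr 1
      · field_simp; ring
      · simp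
    rw [h1, Finset.prod_add]
    apply Finset.sum_congr rfl
    intro T hT
    have hcard : (univ \ T).card = N - T.card := by
      rw [Finset.card_sdiff_of_subset (Finset.subset_univ T)]
      simp
    rw [Finset.prod_const, Finset.prod_const, hcard]
  calc (Nat.choose n M : ℝ) * Real.exp (-(N : ℝ) ^ 2 / ((M : ℝ) - N)) * ((1:ℝ)/(n:ℝ)) ^ N
      = ∑ T ∈ (univ : Finset (Fin N)).powerset,
          (Nat.choose n M : ℝ) * Real.exp (-(N : ℝ) ^ 2 / ((M : ℝ) - N)) *
            ((γ/(n:ℝ))^T.card * ((1-γ)/(n:ℝ))^(N - T.card)) := by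
        rw [hlhs, Finset.mul_sum]
    _ ≤ ∑ T ∈ (univ : Finset (Fin N)).powerset,
          ((γ/M)^T.card * (Nat.choose (n - (T.image z).card) (M - (T.image z).card) : ℝ))
            * ((1-γ)/(n:ℝ))^(N - T.card) := by
        apply Finset.sum_le_sum
        intro T hT
        have htN : T.card ≤ N := by
          simpa using Finset.card_le_card (Finset.subset_univ T)
        have hdt : (T.image z).card ≤ T.card := Finset.card_image_le
        have hA : (0:ℝ) ≤ ((1-γ)/(n:ℝ))^(N - T.card) := by
          have : (0:ℝ) ≤ (1-γ)/(n:ℝ) := by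
            apply div_nonneg _ (le_of_lt hnr); linarith
          positivity
        have := aux_key n M N T.card (T.image z).card γ hγ0 hNM hMn hdt htN
        calc (Nat.choose n M : ℝ) * Real.exp (-(N : ℝ) ^ 2 / ((M : ℝ) - N)) *
              ((γ/(n:ℝ))^T.card * ((1-γ)/(n:ℝ))^(N - T.card))
            = ((Nat.choose n M : ℝ) * Real.exp (-(N : ℝ) ^ 2 / ((M : ℝ) - N)) *
              (γ/(n:ℝ))^T.card) * ((1-γ)/(n:ℝ))^(N - T.card) := by ring
          _ ≤ _ := mul_le_mul_of_nonneg_right this hA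
    _ = ∑ S ∈ (univ : Finset X).powersetCard M,
          ∏ i : Fin N, ((if z i ∈ S then γ / M else 0) + (1 - γ) / (n:ℝ)) := by
        rw [Finset.sum_congr rfl (fun S _ => hexp S), Finset.sum_comm]
        apply Finset.sum_congr rfl
        intro T hT
        have hd : (T.image z).card ≤ M := by
          have h1 : (T.image z).card ≤ T.card := Finset.card_image_le
          have h2 : T.card ≤ N := by
            simpa using Finset.card_le_card (Finset.subset_univ T)
          omega
        rw [← Finset.sum_mul]
        congr 1
        rw [Finset.sum_ite, Finset.sum_const, Finset.sum_const_zero, add_zero,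
          aux_count M (T.image z) hd, nsmul_eq_mul, mul_comm]

end AuxCombinatorics

section AuxMeasure

lemma aux_le_of_singleton {A : Type*} [Fintype A] [MeasurableSpace A]
    [MeasurableSingletonClass A] (μ ν : Measure A)
    (h : ∀ z : A, μ {z} ≤ ν {z}) : μ ≤ ν := by
  classical
  have key : ∀ (m : Measure A) (E : Set A), m E = ∑ z ∈ E.toFinset, m {z} := by
    intro m E
    have hE : E = ⋃ z ∈ E.toFinset, ({z} : Set A) := by
      ext x; simp
    have hdisj : Set.PairwiseDisjoint (E.toFinset : Set A) (fun z => ({z} : Set A)) := by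
      intro x _ y _ hxy
      simp [Set.disjoint_singleton, hxy]
    conv_lhs => rw [hE]
    exact measure_biUnion_finset hdisj (fun b _ => measurableSet_singleton b)
  refine Measure.le_iff.2 (fun E _ => ?_)
  rw [key μ E, key ν E]
  exact Finset.sum_le_sum fun z _ => h z

lemma aux_prod_sum {A B ι : Type*} [MeasurableSpace A] [MeasurableSpace B]
    (s : Finset ι) (μ : ι → Measure A) (ν₀ : Measure A) (ν : Measure B) [SFinite ν]
    (k : ℝ≥0∞) (h : k • ν₀ ≤ ∑ i ∈ s, μ i) (E : Set (A × B)) :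
    k * (ν₀.prod ν) E ≤ ∑ i ∈ s, ((μ i).prod ν) E := by
  classical
  have hts : ∀ i : ι, ∃ t : Set (A × B), E ⊆ t ∧ MeasurableSet t ∧
      ((μ i).prod ν) t = ((μ i).prod ν) E := fun i =>
    MeasureTheory.exists_measurable_superset ((μ i).prod ν) E
  choose t ht htm htv using hts
  set T : Set (A × B) := ⋂ i ∈ s, t i with hT
  have hET : E ⊆ T := by
    intro x hx
    simp only [hT, Set.mem_iInter]
    intro i _
    exact ht i hx
  have hTm : MeasurableSet T := MeasurableSet.biInter s.countable_toSet (fun i _ => htm i)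
  have hTv : ∀ i ∈ s, ((μ i).prod ν) T = ((μ i).prod ν) E := by
    intro i hi
    apply le_antisymm
    · calc ((μ i).prod ν) T ≤ ((μ i).prod ν) (t i) :=
            measure_mono (Set.biInter_subset_of_mem hi)
        _ = ((μ i).prod ν) E := htv i
    · exact measure_mono hET
  calc k * (ν₀.prod ν) E ≤ k * (ν₀.prod ν) T := by
        exact mul_le_mul_right (measure_mono hET) k
    _ = k * ∫⁻ x, ν (Prod.mk x ⁻¹' T) ∂ν₀ := by rw [Measure.prod_apply hTm]
    _ = ∫⁻ x, ν (Prod.mk x ⁻¹' T) ∂(k • ν₀) := by rw [lintegral_smul_measure, smul_eq_mul]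
    _ ≤ ∫⁻ x, ν (Prod.mk x ⁻¹' T) ∂(∑ i ∈ s, μ i) := lintegral_mono' h (le_refl _)
    _ = ∑ i ∈ s, ∫⁻ x, ν (Prod.mk x ⁻¹' T) ∂(μ i) := lintegral_finset_sum_measure s _ μ
    _ = ∑ i ∈ s, ((μ i).prod ν) T := by
        apply Finset.sum_congr rfl
        intro i _
        rw [Measure.prod_apply hTm]
    _ = ∑ i ∈ s, ((μ i).prod ν) E := Finset.sum_congr rfl hTv

end AuxMeasure


set_option maxHeartbeats 1000000 in
/-- Impossibility: any α-error Type-2 detector (receiving the dataset and the clean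
distribution P₀, possibly randomized via Ω) over P = {(P₀,P_b) : TV ≥ 1-β}
satisfies α ≥ ½ exp(-N²/(M-N)), where M = ⌊β|X|⌋ and N < M. -/
theorem stmt13 {X Ω : Type*} [Fintype X] [MeasurableSpace X] [MeasurableSingletonClass X]
    [MeasurableSpace Ω] (μΩ : Measure Ω) [IsProbabilityMeasure μΩ]
    (N : ℕ) (γ β α : ℝ) (hγ0 : 0 < γ) (hγ1 : γ ≤ 1) (hβ0 : 0 ≤ β) (hβ1 : β ≤ 1)
    (hα0 : 0 < α) (hα1 : α ≤ 1 / 2)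
    (hNM : N < Nat.floor (β * Fintype.card X))
    (g : (Fin N → X) → PMF X → Ω → Bool)
    (hdet : ∀ P₀ Pb P₁ : PMF X,
      (∀ x, P₁ x = ENNReal.ofReal γ * Pb x + ENNReal.ofReal (1 - γ) * P₀ x) →
      1 - β ≤ tvPMF P₀ Pb →
      1 / 2 * (((Measure.pi fun _ : Fin N => P₁.toMeasure).prod μΩ)
          {q | g q.1 P₀ q.2 = false}).toReal +
      1 / 2 * (((Measure.pi fun _ : Fin N => P₀.toMeasure).prod μΩ)
          {q | g q.1 P₀ q.2 = true}).toReal ≤ α) :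
    α ≥ 1 / 2 * Real.exp (-(N : ℝ) ^ 2 /
      ((Nat.floor (β * Fintype.card X) : ℝ) - N)) := by
  classical
  set n := Fintype.card X with hn
  set M := Nat.floor (β * (n:ℝ)) with hMdef
  set c := Real.exp (-(N : ℝ) ^ 2 / ((M : ℝ) - N)) with hcdef
  have hM0 : 0 < M := by omega
  have hβn0 : (0:ℝ) ≤ β * n := by positivity
  have hMβn : (M:ℝ) ≤ β * n := Nat.floor_le hβn0
  have hMn : M ≤ n := by
    have h2 : β * n ≤ n := by nlinarith [(Nat.cast_nonneg n : (0:ℝ) ≤ (n:ℝ))]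
    have : (M:ℝ) ≤ (n:ℝ) := le_trans hMβn h2
    exact_mod_cast this
  have hn0 : 0 < n := lt_of_lt_of_le hM0 hMn
  have hnr : (0:ℝ) < n := by exact_mod_cast hn0
  have hMr : (0:ℝ) < M := by exact_mod_cast hM0
  have hNMr : (N:ℝ) < M := by exact_mod_cast hNM
  have : Nonempty X := Fintype.card_pos_iff.1 hn0
  set P₀ : PMF X := PMF.uniformOfFintype X with hP₀def
  -- the contaminating distributions
  set Pb : Finset X → PMF X := fun S =>
    if h : S.Nonempty then PMF.uniformOfFinset S h else P₀ with hPbdef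
  have hPb : ∀ S : Finset X, S.card = M → ∀ x,
      Pb S x = if x ∈ S then (M : ℝ≥0∞)⁻¹ else 0 := by
    intro S hS x
    have hne : S.Nonempty := Finset.card_pos.1 (by omega)
    simp only [hPbdef, dif_pos hne, PMF.uniformOfFinset_apply, hS]
  -- mixture PMFs
  have hsum1 : ∀ P : PMF X, ∑ x, P x = 1 := by
    intro P
    rw [← tsum_fintype (L := SummationFilter.unconditional X)]
    exact P.tsum_coe
  have hmixsum : ∀ S : Finset X,
      ∑ x, (ENNReal.ofReal γ * Pb S x + ENNReal.ofReal (1 - γ) * P₀ x) = 1 := by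
    intro S
    rw [Finset.sum_add_distrib, ← Finset.mul_sum, ← Finset.mul_sum, hsum1, hsum1,
      mul_one, mul_one, ← ENNReal.ofReal_add hγ0.le (by linarith)]
    norm_num
  set P₁ : Finset X → PMF X := fun S =>
    PMF.ofFintype (fun x => ENNReal.ofReal γ * Pb S x + ENNReal.ofReal (1 - γ) * P₀ x)
      (hmixsum S) with hP₁def
  have hP₁ : ∀ S x, P₁ S x = ENNReal.ofReal γ * Pb S x + ENNReal.ofReal (1 - γ) * P₀ x :=
    fun S x => rfl
  -- TV lower bound
  have hTV : ∀ S : Finset X, S.card = M → 1 - β ≤ tvPMF P₀ (Pb S) := by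
    intro S hS
    have hpt : ∀ x : X, |(P₀ x).toReal - (Pb S x).toReal|
        = if x ∈ S then (M:ℝ)⁻¹ - (n:ℝ)⁻¹ else (n:ℝ)⁻¹ := by
      intro x
      have h0 : (P₀ x).toReal = (n:ℝ)⁻¹ := by
        simp [hP₀def, PMF.uniformOfFintype_apply, hn]
      rw [h0, hPb S hS x]
      by_cases hx : x ∈ S
      · rw [if_pos hx, if_pos hx]
        have : ((M : ℝ≥0∞)⁻¹).toReal = (M:ℝ)⁻¹ := by simp
        rw [this, abs_of_nonpos]
        · ring
        · have h1 : (n:ℝ)⁻¹ ≤ (M:ℝ)⁻¹ := by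
            apply inv_anti₀ hMr
            exact_mod_cast hMn
          linarith
      · rw [if_neg hx, if_neg hx]
        simp [abs_of_nonneg, inv_nonneg.2 hnr.le]
    have hsum : ∑ x, |(P₀ x).toReal - (Pb S x).toReal|
        = (M:ℝ) * ((M:ℝ)⁻¹ - (n:ℝ)⁻¹) + ((n:ℕ) - (M:ℕ) : ℕ) * (n:ℝ)⁻¹ := by
      rw [Finset.sum_congr rfl (fun x _ => hpt x), Finset.sum_ite, Finset.sum_const,
        Finset.sum_const]
      rw [Finset.filter_univ_mem]
      have hcompl : (Finset.univ.filter (fun x => x ∉ S)).card = n - M := by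
        rw [Finset.filter_not, Finset.filter_univ_mem, Finset.card_sdiff_of_subset (Finset.subset_univ S),
          Finset.card_univ, hS]
      rw [hcompl, hS, nsmul_eq_mul, nsmul_eq_mul]
    rw [tvPMF, hsum]
    have hc1 : ((n:ℕ) - (M:ℕ) : ℕ) = ((n:ℝ) - (M:ℝ) : ℝ) := by push_cast [hMn]; ring
    rw [hc1]
    have e1 : (M:ℝ) * (M:ℝ)⁻¹ = 1 := mul_inv_cancel₀ (ne_of_gt hMr)
    have e2 : (n:ℝ) * (n:ℝ)⁻¹ = 1 := mul_inv_cancel₀ (ne_of_gt hnr)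
    have e3 : (M:ℝ) * (n:ℝ)⁻¹ ≤ β := by
      calc (M:ℝ) * (n:ℝ)⁻¹ ≤ (β * n) * (n:ℝ)⁻¹ :=
            mul_le_mul_of_nonneg_right hMβn (inv_nonneg.2 hnr.le)
        _ = β := by field_simp
    nlinarith [e1, e2, e3]
  -- the collection of supports
  set 𝒮 : Finset (Finset X) := (Finset.univ : Finset X).powersetCard M with h𝒮
  have h𝒮card : 𝒮.card = Nat.choose n M := by
    rw [h𝒮, Finset.card_powersetCard, Finset.card_univ]
  -- measures
  set π : Finset X → Measure (Fin N → X) :=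
    fun S => Measure.pi (fun _ : Fin N => (P₁ S).toMeasure) with hπ
  set π₀ : Measure (Fin N → X) := Measure.pi (fun _ : Fin N => P₀.toMeasure) with hπ₀
  have hsingle : ∀ (P : PMF X) (z : Fin N → X),
      Measure.pi (fun _ : Fin N => P.toMeasure) {z} = ∏ i, P (z i) := by
    intro P z
    rw [← Set.univ_pi_singleton z, Measure.pi_pi]
    exact Finset.prod_congr rfl fun i _ =>
      PMF.toMeasure_apply_singleton P (z i) (measurableSet_singleton _)
  -- pointwise values
  have hP₁val : ∀ (S : Finset X), S.card = M → ∀ x : X,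
      P₁ S x = ENNReal.ofReal ((if x ∈ S then γ / M else 0) + (1 - γ) / (n:ℝ)) := by
    intro S hS x
    rw [hP₁ S x, hPb S hS x]
    have hn' : (P₀ x) = ENNReal.ofReal ((n:ℝ)⁻¹) := by
      rw [ENNReal.ofReal_inv_of_pos hnr, ENNReal.ofReal_natCast]
      simp [hP₀def, PMF.uniformOfFintype_apply, hn]
    rw [hn']
    by_cases hx : x ∈ S
    · rw [if_pos hx, if_pos hx]
      have hM' : (M : ℝ≥0∞)⁻¹ = ENNReal.ofReal ((M:ℝ)⁻¹) := by
        rw [ENNReal.ofReal_inv_of_pos hMr, ENNReal.ofReal_natCast]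
      rw [hM', ← ENNReal.ofReal_mul hγ0.le, ← ENNReal.ofReal_mul (by linarith : (0:ℝ) ≤ 1 - γ),
        ← ENNReal.ofReal_add (mul_nonneg hγ0.le (by positivity))
          (mul_nonneg (by linarith) (by positivity))]
      congr 1
    · rw [if_neg hx, if_neg hx]
      rw [mul_zero, zero_add, ← ENNReal.ofReal_mul (by linarith : (0:ℝ) ≤ 1 - γ), zero_add]
      congr 1
  have hP₀val : ∀ x : X, P₀ x = ENNReal.ofReal ((1:ℝ) / (n:ℝ)) := by
    intro x
    rw [one_div, ENNReal.ofReal_inv_of_pos hnr, ENNReal.ofReal_natCast]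
    simp [hP₀def, PMF.uniformOfFintype_apply, hn]
  -- key measure inequality
  set k : ℝ≥0∞ := ENNReal.ofReal ((Nat.choose n M : ℝ) * c) with hk
  have hmeasle : k • π₀ ≤ ∑ S ∈ 𝒮, π S := by
    apply aux_le_of_singleton
    intro z
    rw [Measure.smul_apply, smul_eq_mul, Measure.finset_sum_apply]
    have hπ₀z : π₀ {z} = ENNReal.ofReal (((1:ℝ) / (n:ℝ)) ^ N) := by
      rw [hπ₀, hsingle P₀ z, Finset.prod_congr rfl (fun i _ => hP₀val (z i)),
        Finset.prod_const, ← ENNReal.ofReal_pow (by positivity)]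
      simp
    have hπSz : ∀ S ∈ 𝒮, π S {z}
        = ENNReal.ofReal (∏ i : Fin N, ((if z i ∈ S then γ / M else 0) + (1 - γ) / (n:ℝ))) := by
      intro S hS
      have hScard : S.card = M := (Finset.mem_powersetCard_univ.1 hS)
      rw [hπ, hsingle (P₁ S) z,
        Finset.prod_congr rfl (fun i _ => hP₁val S hScard (z i)),
        ← ENNReal.ofReal_prod_of_nonneg]
      intro i _
      have : (0:ℝ) ≤ (1-γ)/(n:ℝ) := by
        apply div_nonneg _ hnr.le; linarith
      by_cases hx : z i ∈ S
      · rw [if_pos hx]; positivity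
      · rw [if_neg hx]; linarith
    rw [hπ₀z, Finset.sum_congr rfl hπSz, hk,
      ← ENNReal.ofReal_mul (by positivity), ← ENNReal.ofReal_sum_of_nonneg]
    · apply ENNReal.ofReal_le_ofReal
      rw [mul_assoc, ← mul_assoc]
      exact aux_main M N γ hγ0 hγ1 hNM hMn z
    · intro S hS
      apply Finset.prod_nonneg
      intro i _
      have : (0:ℝ) ≤ (1-γ)/(n:ℝ) := by
        apply div_nonneg _ hnr.le; linarith
      by_cases hx : z i ∈ S
      · rw [if_pos hx]; positivity
      · rw [if_neg hx]; linarith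
  -- apply to the detection sets
  set E : Set ((Fin N → X) × Ω) := {q | g q.1 P₀ q.2 = false} with hE
  set Et : Set ((Fin N → X) × Ω) := {q | g q.1 P₀ q.2 = true} with hEt
  have hEk : k * (π₀.prod μΩ) E ≤ ∑ S ∈ 𝒮, ((π S).prod μΩ) E :=
    aux_prod_sum 𝒮 π π₀ μΩ k hmeasle E
  -- real numbers
  set u : ℝ := ((π₀.prod μΩ) Et).toReal with hu
  set v₀ : ℝ := ((π₀.prod μΩ) E).toReal with hv₀
  have hufin : (π₀.prod μΩ) Et ≠ ⊤ := measure_ne_top _ _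
  have hvfin : ∀ S, ((π S).prod μΩ) E ≠ ⊤ := fun S => measure_ne_top _ _
  have hv₀fin : (π₀.prod μΩ) E ≠ ⊤ := measure_ne_top _ _
  -- 1 ≤ v₀ + u
  have hcover : (1:ℝ) ≤ v₀ + u := by
    have hsub : (Set.univ : Set ((Fin N → X) × Ω)) ⊆ E ∪ Et := by
      intro q _
      by_cases h : g q.1 P₀ q.2 = false
      · exact Or.inl h
      · exact Or.inr (by simpa using h : g q.1 P₀ q.2 = true)
    have h1 : (1:ℝ≥0∞) ≤ (π₀.prod μΩ) E + (π₀.prod μΩ) Et := by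
      calc (1:ℝ≥0∞) = (π₀.prod μΩ) Set.univ := by rw [measure_univ]
        _ ≤ (π₀.prod μΩ) (E ∪ Et) := measure_mono hsub
        _ ≤ _ := measure_union_le E Et
    have := ENNReal.toReal_mono (by
      exact ENNReal.add_ne_top.2 ⟨hv₀fin, hufin⟩) h1
    rw [ENNReal.toReal_add hv₀fin hufin] at this
    simpa using this
  -- key real inequality
  have hcc0 : 0 < c := Real.exp_pos _
  have hcc1 : c ≤ 1 := by
    rw [hcdef]
    calc Real.exp (-(N : ℝ) ^ 2 / ((M : ℝ) - N)) ≤ Real.exp 0 := by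
          apply Real.exp_le_exp.2
          apply div_nonpos_of_nonpos_of_nonneg
          · simp [sq_nonneg]
          · linarith
      _ = 1 := Real.exp_zero
  have hkey : (Nat.choose n M : ℝ) * c * v₀ ≤ ∑ S ∈ 𝒮, (((π S).prod μΩ) E).toReal := by
    have h1 := ENNReal.toReal_mono (a := k * (π₀.prod μΩ) E)
      (by
        apply ne_of_lt
        apply lt_of_le_of_lt (Finset.sum_le_sum (fun S _ => le_of_eq rfl) :
          (∑ S ∈ 𝒮, ((π S).prod μΩ) E) ≤ ∑ S ∈ 𝒮, ((π S).prod μΩ) E)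
        exact lt_of_le_of_lt (Finset.sum_le_sum fun S _ => measure_mono (Set.subset_univ E))
          (by
            simp only [measure_univ]
            rw [Finset.sum_const]
            simp [lt_top_iff_ne_top]))
      hEk
    rw [ENNReal.toReal_mul, hk, ENNReal.toReal_ofReal (by positivity),
      ENNReal.toReal_sum (fun S _ => hvfin S)] at h1
    exact h1
  -- detector inequalities
  have hdetS : ∀ S ∈ 𝒮, 1 / 2 * (((π S).prod μΩ) E).toReal + 1 / 2 * u ≤ α := by
    intro S hS
    have hScard : S.card = M := (Finset.mem_powersetCard_univ.1 hS)
    exact hdet P₀ (Pb S) (P₁ S) (hP₁ S) (hTV S hScard)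
  have hsumdet : 1 / 2 * (∑ S ∈ 𝒮, (((π S).prod μΩ) E).toReal)
      + 1 / 2 * (Nat.choose n M : ℝ) * u ≤ (Nat.choose n M : ℝ) * α := by
    have h := Finset.sum_le_sum hdetS
    simp only [Finset.sum_add_distrib, ← Finset.mul_sum, Finset.sum_const, h𝒮card,
      nsmul_eq_mul] at h
    linarith [h]
  -- conclude
  have hC : (0:ℝ) < (Nat.choose n M : ℝ) := by
    exact_mod_cast Nat.choose_pos hMn
  have hu0 : 0 ≤ u := ENNReal.toReal_nonneg
  have hv00 : 0 ≤ v₀ := ENNReal.toReal_nonneg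
  rw [ge_iff_le]
  show 1/2 * c ≤ α
  nlinarith [hkey, hsumdet, hC,
    mul_nonneg (mul_nonneg hC.le hcc0.le) (by linarith : (0:ℝ) ≤ v₀ + u - 1),
    mul_nonneg hC.le (mul_nonneg (sub_nonneg.2 hcc1) hu0)]
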